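/- arXiv:1606.05577 — 3 statements merged into one kernel-verified Lean document; each statement's English description precedes it below -/
import Mathlib

section
/- Let θ : (0,1] → [0,∞) be a non-decreasing function with ∫₀¹ θ(t)/t dt < ∞. Define θ̃(t) = t · sup_{τ ∈ [t,1]} θ(τ)/τ for t ∈ (0,1]. Then: (i) θ(t) ≤ θ̃(t) for all t ∈ (0,1]; (ii) the function t ↦ θ̃(t)/t is non-increasing on (0,1], and consequently θ̃(2t) ≤ 2 θ̃(t) for all t ∈ (0,1/2]; (iii) ∫₀¹ θ̃(t)/t dt < ∞. -/
open Set MeasureTheory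

/-- Any Dini modulus `θ` on `(0,1]` is dominated by `θ̃ t = t * sup_{τ ∈ [t,1]} θ τ / τ`,
which is again a Dini modulus such that `θ̃ t / t` is non-increasing; in particular
`θ̃` satisfies the doubling property `θ̃ (2 t) ≤ 2 * θ̃ t`. -/
theorem dini_modulus_dominated_by_doubling_modulus
    (θ : ℝ → ℝ)
    (hθ_nonneg : ∀ t ∈ Ioc (0 : ℝ) 1, 0 ≤ θ t)
    (hθ_mono : MonotoneOn θ (Ioc (0 : ℝ) 1))
    (hθ_dini : ∫⁻ t in Ioc (0 : ℝ) 1, ENNReal.ofReal (θ t / t) < ⊤)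
    (θt : ℝ → ℝ)
    (hθt : ∀ t ∈ Ioc (0 : ℝ) 1, θt t = t * sSup ((fun τ => θ τ / τ) '' Icc t 1)) :
    (∀ t ∈ Ioc (0 : ℝ) 1, θ t ≤ θt t) ∧
    AntitoneOn (fun t => θt t / t) (Ioc (0 : ℝ) 1) ∧
    (∀ t ∈ Ioc (0 : ℝ) (1 / 2), θt (2 * t) ≤ 2 * θt t) ∧
    ∫⁻ t in Ioc (0 : ℝ) 1, ENNReal.ofReal (θt t / t) < ⊤ := by
  have h1 : (1:ℝ) ∈ Ioc (0:ℝ) 1 := by norm_num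
  have hθ1 : 0 ≤ θ 1 := hθ_nonneg 1 h1
  set M : ℝ → ℝ := fun t => sSup ((fun τ => θ τ / τ) '' Icc t 1) with hM
  have hne : ∀ t ∈ Ioc (0:ℝ) 1, ((fun τ => θ τ / τ) '' Icc t 1).Nonempty := by
    intro t ht
    exact ⟨θ 1 / 1, ⟨1, ⟨ht.2, le_rfl⟩, rfl⟩⟩
  have hbdd : ∀ t ∈ Ioc (0:ℝ) 1, BddAbove ((fun τ => θ τ / τ) '' Icc t 1) := by
    intro t ht
    refine ⟨θ 1 / t, ?_⟩
    rintro x ⟨τ, hτ, rfl⟩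
    have hτ0 : 0 < τ := lt_of_lt_of_le ht.1 hτ.1
    have hθτ : θ τ ≤ θ 1 := hθ_mono ⟨hτ0, hτ.2⟩ h1 hτ.2
    calc θ τ / τ ≤ θ 1 / τ := by gcongr
      _ ≤ θ 1 / t := by gcongr <;> first | exact ht.1 | exact hτ.1
  have hManti : ∀ a ∈ Ioc (0:ℝ) 1, ∀ b ∈ Ioc (0:ℝ) 1, a ≤ b → M b ≤ M a := by
    intro a ha b hb hab
    exact csSup_le_csSup (hbdd a ha) (hne b hb)
      (image_mono (Icc_subset_Icc_left hab))
  have hθtM : ∀ t ∈ Ioc (0:ℝ) 1, θt t / t = M t := by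
    intro t ht
    rw [hθt t ht, mul_div_cancel_left₀ _ (ne_of_gt ht.1)]
  -- part (i)
  have part1 : ∀ t ∈ Ioc (0:ℝ) 1, θ t ≤ θt t := by
    intro t ht
    rw [hθt t ht]
    have hmem : θ t / t ∈ (fun τ => θ τ / τ) '' Icc t 1 := ⟨t, ⟨le_rfl, ht.2⟩, rfl⟩
    exact (div_le_iff₀' ht.1).mp (le_csSup (hbdd t ht) hmem)
  -- part (ii)
  have part2 : AntitoneOn (fun t => θt t / t) (Ioc (0:ℝ) 1) := by
    intro a ha b hb hab
    show θt b / b ≤ θt a / a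
    rw [hθtM a ha, hθtM b hb]
    exact hManti a ha b hb hab
  -- doubling
  have part3 : ∀ t ∈ Ioc (0:ℝ) (1/2), θt (2*t) ≤ 2 * θt t := by
    intro t ht
    have ht1 : t ∈ Ioc (0:ℝ) 1 := ⟨ht.1, by linarith [ht.2]⟩
    have h2t : 2*t ∈ Ioc (0:ℝ) 1 := ⟨by linarith [ht.1], by linarith [ht.2]⟩
    rw [hθt t ht1, hθt (2*t) h2t]
    have := hManti t ht1 (2*t) h2t (by linarith [ht.1])
    calc 2*t * M (2*t) ≤ 2*t * M t := by
          exact mul_le_mul_of_nonneg_left this (by linarith [ht.1])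
      _ = 2 * (t * M t) := by ring
  refine ⟨part1, part2, part3, ?_⟩
  -- part (iii)
  set μ : Measure ℝ := volume.restrict (Ioc (0:ℝ) 1) with hμ
  set g : ℝ → ENNReal := fun s => ENNReal.ofReal (θ s / s^2) with hg
  set I : ℝ → ENNReal := fun t => ∫⁻ s in Ioc t 1, g s with hI
  have hItop : ∀ t ∈ Ioc (0:ℝ) 1, I t ≠ ⊤ := by
    intro t ht
    have hb : I t ≤ ENNReal.ofReal (θ 1 / t^2) * volume (Ioc t 1) := by
      rw [← setLIntegral_const]
      apply lintegral_mono_ae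
      filter_upwards [ae_restrict_mem measurableSet_Ioc] with s hs
      apply ENNReal.ofReal_le_ofReal
      have hs1 : s ∈ Ioc (0:ℝ) 1 := ⟨lt_trans ht.1 hs.1, hs.2⟩
      have hθs : θ s ≤ θ 1 := hθ_mono hs1 h1 hs.2
      have h2 : t^2 ≤ s^2 := by nlinarith [ht.1, hs.1]
      exact div_le_div₀ hθ1 hθs (pow_pos ht.1 2) h2
    have hvol : ENNReal.ofReal (θ 1 / t^2) * volume (Ioc t 1) ≠ ⊤ := by
      rw [Real.volume_Ioc]
      exact ENNReal.mul_ne_top ENNReal.ofReal_ne_top ENNReal.ofReal_ne_top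
    exact ne_top_of_le_ne_top hvol hb
  -- key pointwise bound
  have hB : ∀ t ∈ Ioc (0:ℝ) 1, M t ≤ 4 * (I t).toReal + 2 * θ 1 := by
    intro t ht
    apply csSup_le (hne t ht)
    rintro x ⟨τ, hτ, rfl⟩
    have hτ0 : 0 < τ := lt_of_lt_of_le ht.1 hτ.1
    show θ τ / τ ≤ 4 * (I t).toReal + 2 * θ 1
    by_cases hhalf : τ ≤ 1/2
    · have key : ENNReal.ofReal (θ τ / (4*τ)) ≤ I t := by
        have hsub : Ioc τ (2*τ) ⊆ Ioc t 1 := by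
          intro s hs
          exact ⟨lt_of_le_of_lt hτ.1 hs.1, hs.2.trans (by linarith)⟩
        have hθτ0 : 0 ≤ θ τ := hθ_nonneg τ ⟨hτ0, hτ.2⟩
        calc ENNReal.ofReal (θ τ / (4*τ))
            = ENNReal.ofReal (θ τ / (4*τ^2)) * volume (Ioc τ (2*τ)) := by
              rw [Real.volume_Ioc, ← ENNReal.ofReal_mul (by positivity)]
              congr 1
              field_simp
              ring
          _ = ∫⁻ _ in Ioc τ (2*τ), ENNReal.ofReal (θ τ / (4*τ^2)) := by
              rw [setLIntegral_const]
          _ ≤ ∫⁻ s in Ioc τ (2*τ), g s := by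
              apply lintegral_mono_ae
              filter_upwards [ae_restrict_mem measurableSet_Ioc] with s hs
              apply ENNReal.ofReal_le_ofReal
              have hs1 : s ∈ Ioc (0:ℝ) 1 := ⟨lt_trans hτ0 hs.1, hs.2.trans (by linarith)⟩
              have hθs : θ τ ≤ θ s := hθ_mono ⟨hτ0, hτ.2⟩ hs1 hs.1.le
              have h2 : s^2 ≤ 4*τ^2 := by nlinarith [hs.1.le, hs.2]
              exact div_le_div₀ (hθ_nonneg s hs1) hθs (pow_pos hs1.1 2) h2
          _ ≤ I t := lintegral_mono' (Measure.restrict_mono hsub le_rfl) le_rfl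
      have h4 : θ τ / (4*τ) ≤ (I t).toReal :=
        (ENNReal.ofReal_le_iff_le_toReal (hItop t ht)).mp key
      have : θ τ / τ = 4 * (θ τ / (4*τ)) := by field_simp
      rw [this]
      nlinarith [h4, hθ1]
    · push_neg at hhalf
      have hθτ : θ τ ≤ θ 1 := hθ_mono ⟨hτ0, hτ.2⟩ h1 hτ.2
      have : θ τ / τ ≤ 2 * θ 1 := by
        rw [div_le_iff₀ hτ0]
        nlinarith
      nlinarith [ENNReal.toReal_nonneg (a := I t)]
  -- Tonelli: ∫ I < ⊤
  have hθae : AEMeasurable θ μ := aemeasurable_restrict_of_monotoneOn measurableSet_Ioc hθ_mono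
  have hgae : AEMeasurable g μ := by
    exact (hθae.div ((measurable_id.pow_const 2).aemeasurable)).ennreal_ofReal
  set f : ℝ → ℝ → ENNReal := fun t s => if t < s then g s else 0 with hf
  have hfae : AEMeasurable (Function.uncurry f) (μ.prod μ) := by
    have heq : Function.uncurry f =
        ({p : ℝ × ℝ | p.1 < p.2}).indicator (fun p => g p.2) := by
      ext p
      by_cases hp : p.1 < p.2 <;>
        simp [Function.uncurry, hf, hp, indicator_apply, Set.mem_setOf_eq]
    rw [heq]
    exact (hgae.comp_snd).indicator (measurableSet_lt measurable_fst measurable_snd)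
  have hIint : ∫⁻ t, I t ∂μ < ⊤ := by
    have step1 : ∫⁻ t, I t ∂μ = ∫⁻ t, ∫⁻ s, f t s ∂μ ∂μ := by
      apply lintegral_congr_ae
      filter_upwards [ae_restrict_mem measurableSet_Ioc] with t ht
      have : ∀ s, f t s = (Ioi t).indicator g s := by
        intro s
        by_cases hs : t < s <;> simp [hf, hs, indicator_apply, Set.mem_Ioi]
      simp_rw [this]
      rw [hμ, lintegral_indicator measurableSet_Ioi, Measure.restrict_restrict measurableSet_Ioi]
      have : Ioi t ∩ Ioc 0 1 = Ioc t 1 := by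
        ext s
        simp only [mem_inter_iff, mem_Ioi, mem_Ioc]
        constructor
        · rintro ⟨h1', h2', h3'⟩; exact ⟨h1', h3'⟩
        · rintro ⟨h1', h2'⟩; exact ⟨h1', lt_trans ht.1 h1', h2'⟩
      rw [this]
    have step2 : ∫⁻ t, ∫⁻ s, f t s ∂μ ∂μ = ∫⁻ s, ∫⁻ t, f t s ∂μ ∂μ :=
      lintegral_lintegral_swap hfae
    have step3 : ∫⁻ s, ∫⁻ t, f t s ∂μ ∂μ = ∫⁻ s in Ioc (0:ℝ) 1, ENNReal.ofReal (θ s / s) := by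
      apply lintegral_congr_ae
      filter_upwards [ae_restrict_mem measurableSet_Ioc] with s hs
      have heq : ∀ t, f t s = (Iio s).indicator (fun _ => g s) t := by
        intro t
        by_cases htlt : t < s <;> simp [hf, htlt, indicator_apply, Set.mem_Iio]
      simp_rw [heq]
      rw [hμ, lintegral_indicator measurableSet_Iio, Measure.restrict_restrict measurableSet_Iio,
        lintegral_const, Measure.restrict_apply MeasurableSet.univ, univ_inter]
      have hset : Iio s ∩ Ioc 0 1 = Ioo 0 s := by
        ext u
        simp only [mem_inter_iff, mem_Iio, mem_Ioc, mem_Ioo]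
        constructor
        · rintro ⟨h1', h2', h3'⟩; exact ⟨h2', h1'⟩
        · rintro ⟨h1', h2'⟩; exact ⟨h2', h1', le_trans h2'.le hs.2⟩
      rw [hset, Real.volume_Ioo, hg]
      rw [← ENNReal.ofReal_mul (div_nonneg (hθ_nonneg s hs) (sq_nonneg s))]
      congr 1
      have hs0 : s ≠ 0 := ne_of_gt hs.1
      field_simp
      ring
    rw [step1, step2, step3]
    exact hθ_dini
  -- final bound
  have hfinal : ∫⁻ t, ENNReal.ofReal (θt t / t) ∂μ ≤
      ∫⁻ t, (4 * I t + ENNReal.ofReal (2 * θ 1)) ∂μ := by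
    apply lintegral_mono_ae
    filter_upwards [ae_restrict_mem measurableSet_Ioc] with t ht
    rw [hθtM t ht]
    calc ENNReal.ofReal (M t) ≤ ENNReal.ofReal (4 * (I t).toReal + 2 * θ 1) :=
          ENNReal.ofReal_le_ofReal (hB t ht)
      _ ≤ ENNReal.ofReal (4 * (I t).toReal) + ENNReal.ofReal (2 * θ 1) :=
          ENNReal.ofReal_add_le
      _ = 4 * I t + ENNReal.ofReal (2 * θ 1) := by
          rw [ENNReal.ofReal_mul (by norm_num), ENNReal.ofReal_toReal (hItop t ht)]
          norm_num
  have hsum : ∫⁻ t, (4 * I t + ENNReal.ofReal (2 * θ 1)) ∂μ < ⊤ := by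
    rw [lintegral_add_right _ measurable_const, lintegral_const_mul' _ _ (by norm_num),
      lintegral_const]
    apply ENNReal.add_lt_top.mpr
    constructor
    · exact ENNReal.mul_lt_top (by norm_num) hIint
    · apply ENNReal.mul_lt_top ENNReal.ofReal_lt_top
      rw [hμ, Measure.restrict_apply MeasurableSet.univ, univ_inter]
      simp [Real.volume_Ioc]
  exact lt_of_le_of_lt hfinal hsum
end

section
/- Let n ≥ 2 be an integer, γ > 1, and R > 1 be such that (n-1)·log(R/r) - γ > 0 for all r ∈ (0,1] (e.g. R > e^{γ/(n-1)}). Define u(r) = ∫_r¹ t^{1-n} (log(R/t))^{-γ} dt and α(r) = γ / ((n-1)·log(R/r) - γ). Then for every r ∈ (0,1), (α(r) + 1)·u''(r) + ((n-1)/r)·u'(r) = 0. -/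
open Set Real

/-- For `n ≥ 2`, `γ > 1` and `R > 1` with `(n-1) log (R/r) - γ > 0` on `(0,1]`,
the function `u r = ∫_r^1 t^(1-n) (log (R/t))^(-γ) dt` solves the ODE
`(α(r) + 1) u'' + ((n-1)/r) u' = 0` on `(0,1)`, where
`α r = γ / ((n-1) log (R/r) - γ)`. -/
theorem radial_counterexample_solves_ode
    (n : ℕ) (hn : 2 ≤ n) (γ R : ℝ) (hγ : 1 < γ) (hR : 1 < R)
    (hRbig : ∀ r ∈ Ioc (0 : ℝ) 1, 0 < ((n : ℝ) - 1) * log (R / r) - γ)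
    (u : ℝ → ℝ)
    (hu : u = fun s : ℝ => ∫ t in s..1, t ^ ((1 : ℝ) - n) * (log (R / t)) ^ (-γ)) :
    ∀ r ∈ Ioo (0 : ℝ) 1,
      (γ / (((n : ℝ) - 1) * log (R / r) - γ) + 1) * deriv (deriv u) r
        + (((n : ℝ) - 1) / r) * deriv u r = 0 := by
  have hn1 : (1:ℝ) ≤ (n:ℝ) - 1 := by
    have : (2:ℝ) ≤ (n:ℝ) := by exact_mod_cast hn
    linarith
  set f : ℝ → ℝ := fun t => t ^ ((1 : ℝ) - n) * (log (R / t)) ^ (-γ) with hfdef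
  -- continuity of f at points of Ioo 0 R
  have hca : ∀ t ∈ Ioo (0:ℝ) R, ContinuousAt f t := by
    intro t ht
    have ht0 : (0:ℝ) < t := ht.1
    have hL : 0 < log (R / t) := Real.log_pos (by rw [lt_div_iff₀ ht0]; simpa using ht.2)
    have h1 : ContinuousAt (fun t : ℝ => t ^ ((1:ℝ) - n)) t :=
      continuousAt_id.rpow_const (Or.inl ht0.ne')
    have h2 : ContinuousAt (fun t : ℝ => log (R / t)) t :=
      ((continuousAt_const.div continuousAt_id ht0.ne').log
        (div_ne_zero (by positivity) ht0.ne'))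
    exact h1.mul (h2.rpow_const (Or.inl hL.ne'))
  have hcont : ContinuousOn f (Ioo (0:ℝ) R) :=
    continuousOn_of_forall_continuousAt hca
  -- first derivative of u on Ioo 0 1
  have hud : ∀ s ∈ Ioo (0:ℝ) 1, HasDerivAt u (-(f s)) s := by
    intro s hs
    have hsub : uIcc s 1 ⊆ Ioo (0:ℝ) R := by
      rw [uIcc_of_le hs.2.le]
      intro x hx
      exact ⟨lt_of_lt_of_le hs.1 hx.1, lt_of_le_of_lt hx.2 hR⟩
    have hint : IntervalIntegrable f MeasureTheory.volume s 1 :=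
      (hcont.mono hsub).intervalIntegrable
    have hmeas := hcont.stronglyMeasurableAtFilter (μ := MeasureTheory.volume)
      isOpen_Ioo s ⟨hs.1, hs.2.trans hR⟩
    rw [hu]
    exact intervalIntegral.integral_hasDerivAt_left hint hmeas
      (hca s ⟨hs.1, hs.2.trans hR⟩)
  intro r hr
  obtain ⟨hr0, hr1⟩ := hr
  have hL : 0 < log (R / r) := Real.log_pos (by rw [lt_div_iff₀ hr0]; nlinarith)
  set L : ℝ := log (R / r) with hLdef
  set D : ℝ := ((n:ℝ) - 1) * L - γ with hDdef
  have hD : 0 < D := hRbig r ⟨hr0, hr1.le⟩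
  -- deriv u = -f on a neighborhood of r
  have hev : deriv u =ᶠ[nhds r] fun s => -(f s) := by
    filter_upwards [isOpen_Ioo.mem_nhds (⟨hr0, hr1⟩ : r ∈ Ioo (0:ℝ) 1)] with s hs
    exact (hud s hs).deriv
  have hderiv_u : deriv u r = -(f r) := (hud r ⟨hr0, hr1⟩).deriv
  -- second derivative
  have hlog : HasDerivAt (fun s : ℝ => log (R / s)) (-(r⁻¹)) r := by
    have hdiv : HasDerivAt (fun s : ℝ => R / s) (-(R / r ^ 2)) r := by
      have := (hasDerivAt_inv hr0.ne').const_mul R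
      simp only [div_eq_mul_inv]
      exact this.congr_deriv (by ring)
    have := (Real.hasDerivAt_log (div_ne_zero (by positivity) hr0.ne')).comp r hdiv
    have hR0 : R ≠ 0 := by positivity
    exact this.congr_deriv (by field_simp)
  have hpow : HasDerivAt (fun s : ℝ => s ^ ((1:ℝ) - n))
      (((1:ℝ) - n) * r ^ ((1:ℝ) - n - 1)) r :=
    Real.hasDerivAt_rpow_const (Or.inl hr0.ne')
  have hLpow : HasDerivAt (fun s : ℝ => (log (R / s)) ^ (-γ))
      ((-γ) * L ^ (-γ - 1) * (-(r⁻¹))) r := by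
    have := hlog.rpow_const (p := -γ) (Or.inl hL.ne')
    convert this using 1
    ring
  have hf' : HasDerivAt f
      ((((1:ℝ) - n) * r ^ ((1:ℝ) - n - 1)) * L ^ (-γ)
        + r ^ ((1:ℝ) - n) * ((-γ) * L ^ (-γ - 1) * (-(r⁻¹)))) r := hpow.mul hLpow
  have hd2 : deriv (deriv u) r =
      -((((1:ℝ) - n) * r ^ ((1:ℝ) - n - 1)) * L ^ (-γ)
        + r ^ ((1:ℝ) - n) * ((-γ) * L ^ (-γ - 1) * (-(r⁻¹)))) := by
    rw [hev.deriv_eq]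
    exact (hf'.neg).deriv
  -- algebra
  rw [hd2, hderiv_u]
  simp only [hfdef]
  rw [← hLdef]
  have e1 : r ^ ((1:ℝ) - n - 1) = r ^ ((1:ℝ) - n) * r⁻¹ := by
    rw [Real.rpow_sub hr0, Real.rpow_one]
    ring
  have e2 : L ^ (-γ - 1) = L ^ (-γ) * L⁻¹ := by
    rw [Real.rpow_sub hL, Real.rpow_one]
    ring
  rw [e1, e2]
  have hrpow : r ^ ((1:ℝ) - n) ≠ 0 := (Real.rpow_pos_of_pos hr0 _).ne'
  have hLpow' : L ^ (-γ) ≠ 0 := (Real.rpow_pos_of_pos hL _).ne'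
  field_simp
  ring
end

section
/- Let n ≥ 2, let φ : (0,∞) → ℝ be twice continuously differentiable, and define u : ℝⁿ \ {0} → ℝ by u(x) = x₁ x₂ φ(|x|). Then u is twice differentiable on ℝⁿ \ {0}, and for every x ≠ 0 and every β ∈ ℝ, writing r = |x|, the trace of (I + β (x/r) ⊗ (x/r)) · D²u(x) equals (x₁ x₂ / r²) · [ (n+3) r φ'(r) + r² φ''(r) + β ( 2φ(r) + 4 r φ'(r) + r² φ''(r) ) ]. -/
open Set Real

lemma hasFDerivAt_norm' {F : Type*} [NormedAddCommGroup F] [InnerProductSpace ℝ F]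
    (x : F) (hx : x ≠ 0) :
    HasFDerivAt (fun y : F => ‖y‖) (‖x‖⁻¹ • innerSL ℝ x) x := by
  have h1 : HasFDerivAt (fun y : F => ‖y‖^2) (2 • (innerSL ℝ x)) x :=
    (hasStrictFDerivAt_norm_sq x).hasFDerivAt
  have hx' : ‖x‖ ≠ 0 := norm_ne_zero_iff.mpr hx
  have hs : (‖x‖:ℝ)^2 ≠ 0 := pow_ne_zero _ hx'
  have h2 := (Real.hasDerivAt_sqrt hs).comp_hasFDerivAt x h1
  have h3 : ((fun x => √x) ∘ fun y : F => ‖y‖ ^ 2) = fun y : F => ‖y‖ := by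
    funext y; simp [Function.comp, Real.sqrt_sq (norm_nonneg y)]
  rw [h3] at h2
  refine h2.congr_fderiv ?_
  rw [Real.sqrt_sq (norm_nonneg x)]
  ext v
  rw [two_smul]
  simp only [ContinuousLinearMap.smul_apply, ContinuousLinearMap.add_apply, smul_eq_mul]
  field_simp
  ring

lemma sum_delta' {n : ℕ} (a : Fin n) (f : Fin n → ℝ) :
    ∑ k : Fin n, (if a = k then (1:ℝ) else 0) * f k = f a := by
  simp only [ite_mul, one_mul, zero_mul, Finset.sum_ite_eq, Finset.mem_univ, if_true]

set_option maxHeartbeats 2000000 in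
/-- second-derivative entry computation -/
lemma hessian_entry (n : ℕ) (φ : ℝ → ℝ) (hφ : ContDiffOn ℝ 2 φ (Ioi (0:ℝ))) (i0 i1 : Fin n)
    (u : EuclideanSpace ℝ (Fin n) → ℝ)
    (hufun : u = fun y => y i0 * y i1 * φ ‖y‖)
    (x : EuclideanSpace ℝ (Fin n)) (hx : x ≠ 0) (i j : Fin n) :
    fderiv ℝ (fun y => fderiv ℝ u y (EuclideanSpace.single j 1)) x (EuclideanSpace.single i 1)
      = (if j = i then 1 else 0) * (x i0 * x i1 * deriv φ ‖x‖ / ‖x‖)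
        + (if i1 = i then 1 else 0) * (deriv φ ‖x‖ * x j * x i0 / ‖x‖)
        + (if i0 = i then 1 else 0) * (deriv φ ‖x‖ * x j * x i1 / ‖x‖)
        + (if i1 = j then 1 else 0) *
            (φ ‖x‖ * (if i0 = i then 1 else 0) + x i0 * deriv φ ‖x‖ * x i / ‖x‖)
        + (if i0 = j then 1 else 0) *
            (φ ‖x‖ * (if i1 = i then 1 else 0) + x i1 * deriv φ ‖x‖ * x i / ‖x‖)
        + x i0 * x i1 * deriv (deriv φ) ‖x‖ * x i * x j / ‖x‖^2
        - x i0 * x i1 * deriv φ ‖x‖ * x i * x j / ‖x‖^3 := by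
  have hr : 0 < ‖x‖ := norm_pos_iff.mpr hx
  have hφd : ∀ s : ℝ, 0 < s → HasDerivAt φ (deriv φ s) s := fun s hs =>
    ((hφ.differentiableOn (by norm_num)).differentiableAt (Ioi_mem_nhds hs)).hasDerivAt
  have hφd2 : HasDerivAt (deriv φ) (deriv (deriv φ) ‖x‖) ‖x‖ :=
    (((hφ.deriv_of_isOpen (m := 1) isOpen_Ioi (by norm_num)).differentiableOn
      (by norm_num)).differentiableAt (Ioi_mem_nhds hr)).hasDerivAt
  set c1 : ℝ := (if i1 = j then (1:ℝ) else 0) with hc1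
  set c2 : ℝ := (if i0 = j then (1:ℝ) else 0) with hc2
  have hfd : ∀ y : EuclideanSpace ℝ (Fin n), y ≠ 0 →
      fderiv ℝ u y (EuclideanSpace.single j 1) =
        y i0 * y i1 * (deriv φ ‖y‖ * (‖y‖⁻¹ * y j)) +
          φ ‖y‖ * (y i0 * c1 + y i1 * c2) := by
    intro y hy
    have hy' : 0 < ‖y‖ := norm_pos_iff.mpr hy
    have hA : HasFDerivAt (fun z : EuclideanSpace ℝ (Fin n) => z i0 * z i1)
        (x := y) _ :=
      ((EuclideanSpace.proj i0 : EuclideanSpace ℝ (Fin n) →L[ℝ] ℝ).hasFDerivAt).mul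
        ((EuclideanSpace.proj i1 : EuclideanSpace ℝ (Fin n) →L[ℝ] ℝ).hasFDerivAt)
    have hC : HasFDerivAt (fun z : EuclideanSpace ℝ (Fin n) => φ ‖z‖)
        ((deriv φ ‖y‖) • (‖y‖⁻¹ • innerSL ℝ y)) y :=
      (hφd ‖y‖ hy').comp_hasFDerivAt y (hasFDerivAt_norm' y hy)
    have hU := hA.mul hC
    rw [hufun]
    rw [HasFDerivAt.fderiv (f := fun y : EuclideanSpace ℝ (Fin n) => y i0 * y i1 * φ ‖y‖) hU]
    rw [hc1, hc2]
    simp [EuclideanSpace.inner_single_right, EuclideanSpace.single_apply, real_inner_smul_left]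
    split_ifs <;> ring
  have hev : (fun y => fderiv ℝ u y (EuclideanSpace.single j 1)) =ᶠ[nhds x]
      (fun y => y i0 * y i1 * (deriv φ ‖y‖ * (‖y‖⁻¹ * y j)) +
        φ ‖y‖ * (y i0 * c1 + y i1 * c2)) := by
    filter_upwards [isOpen_compl_singleton.mem_nhds hx] with y hy using hfd y hy
  rw [hev.fderiv_eq]
  have hNx := hasFDerivAt_norm' x hx
  have hA : HasFDerivAt (fun z : EuclideanSpace ℝ (Fin n) => z i0 * z i1) (x := x) _ :=
    ((EuclideanSpace.proj i0 : EuclideanSpace ℝ (Fin n) →L[ℝ] ℝ).hasFDerivAt).mul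
      ((EuclideanSpace.proj i1 : EuclideanSpace ℝ (Fin n) →L[ℝ] ℝ).hasFDerivAt)
  have hB1 : HasFDerivAt (fun z : EuclideanSpace ℝ (Fin n) => deriv φ ‖z‖)
      ((deriv (deriv φ) ‖x‖) • (‖x‖⁻¹ • innerSL ℝ x)) x := hφd2.comp_hasFDerivAt x hNx
  have hinv : HasFDerivAt (fun z : EuclideanSpace ℝ (Fin n) => ‖z‖⁻¹)
      ((-(‖x‖^2)⁻¹) • (‖x‖⁻¹ • innerSL ℝ x)) x := (hasDerivAt_inv hr.ne').comp_hasFDerivAt x hNx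
  have hB2 : HasFDerivAt (fun z : EuclideanSpace ℝ (Fin n) => ‖z‖⁻¹ * z j) (x := x) _ :=
    hinv.mul (EuclideanSpace.proj j : EuclideanSpace ℝ (Fin n) →L[ℝ] ℝ).hasFDerivAt
  have hB : HasFDerivAt (fun z : EuclideanSpace ℝ (Fin n) => deriv φ ‖z‖ * (‖z‖⁻¹ * z j))
      (x := x) _ := hB1.mul hB2
  have hC : HasFDerivAt (fun z : EuclideanSpace ℝ (Fin n) => φ ‖z‖)
      ((deriv φ ‖x‖) • (‖x‖⁻¹ • innerSL ℝ x)) x := (hφd ‖x‖ hr).comp_hasFDerivAt x hNx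
  have hD : HasFDerivAt (fun z : EuclideanSpace ℝ (Fin n) =>
      z i0 * c1 + z i1 * c2) (x := x) _ :=
    (((EuclideanSpace.proj i0 : EuclideanSpace ℝ (Fin n) →L[ℝ] ℝ).hasFDerivAt).mul_const _).add
      (((EuclideanSpace.proj i1 : EuclideanSpace ℝ (Fin n) →L[ℝ] ℝ).hasFDerivAt).mul_const _)
  have hG := (hA.mul hB).add (hC.mul hD)
  rw [HasFDerivAt.fderiv (f := fun y : EuclideanSpace ℝ (Fin n) => y i0 * y i1 * (deriv φ ‖y‖ * (‖y‖⁻¹ * y j)) +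
    φ ‖y‖ * (y i0 * c1 + y i1 * c2)) hG]
  have h3 : ‖x‖ ≠ 0 := hr.ne'
  conv_lhs => simp [EuclideanSpace.inner_single_right, EuclideanSpace.single_apply,
    real_inner_smul_left]
  rw [hc1, hc2]
  split_ifs <;> field_simp <;> ring

set_option maxHeartbeats 1000000 in
/-- For a `C²` function `φ` on `(0,∞)` and `u x = x₁ x₂ φ ‖x‖` on `ℝⁿ \ {0}` (`n ≥ 2`),
`u` is twice differentiable, and for every `β ∈ ℝ`, writing `r = ‖x‖`, the trace of
`(I + β (x/r) ⊗ (x/r)) · D²u(x)` equals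
`(x₁ x₂ / r²) ((n+3) r φ'(r) + r² φ''(r) + β (2 φ(r) + 4 r φ'(r) + r² φ''(r)))`. -/
theorem trace_hessian_x1x2_radial
    (n : ℕ) (hn : 2 ≤ n) (φ : ℝ → ℝ) (hφ : ContDiffOn ℝ 2 φ (Ioi (0 : ℝ)))
    (u : EuclideanSpace ℝ (Fin n) → ℝ)
    (hu : ∀ x, u x = x (⟨0, by omega⟩ : Fin n) * x (⟨1, by omega⟩ : Fin n) * φ ‖x‖) :
    ∀ x : EuclideanSpace ℝ (Fin n), x ≠ 0 →
      ContDiffAt ℝ 2 u x ∧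
      ∀ β : ℝ,
        Matrix.trace
          ((Matrix.of fun i j : Fin n =>
              (if i = j then (1 : ℝ) else 0) + β * (x i / ‖x‖) * (x j / ‖x‖)) *
            (Matrix.of fun i j : Fin n =>
              fderiv ℝ (fun y => fderiv ℝ u y (EuclideanSpace.single j 1)) x
                (EuclideanSpace.single i 1)))
          = (x (⟨0, by omega⟩ : Fin n) * x (⟨1, by omega⟩ : Fin n) / ‖x‖ ^ 2) *
              (((n : ℝ) + 3) * ‖x‖ * deriv φ ‖x‖ + ‖x‖ ^ 2 * deriv (deriv φ) ‖x‖ +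
                β * (2 * φ ‖x‖ + 4 * ‖x‖ * deriv φ ‖x‖ + ‖x‖ ^ 2 * deriv (deriv φ) ‖x‖)) := by
  have h01 : (0:ℕ) < n := by omega
  have h11 : (1:ℕ) < n := by omega
  intro x hx
  have hr : 0 < ‖x‖ := norm_pos_iff.mpr hx
  have h3 : ‖x‖ ≠ 0 := hr.ne'
  have hufun : u = fun y => y ⟨0, h01⟩ * y ⟨1, h11⟩ * φ ‖y‖ := funext hu
  have hne : (⟨0, h01⟩ : Fin n) ≠ ⟨1, h11⟩ := by simp [Fin.ext_iff]
  constructor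
  · rw [hufun]
    have h1 : ContDiffAt ℝ 2 (fun y : EuclideanSpace ℝ (Fin n) => y ⟨0, h01⟩) x :=
      (EuclideanSpace.proj (⟨0, h01⟩ : Fin n) :
        EuclideanSpace ℝ (Fin n) →L[ℝ] ℝ).contDiff.contDiffAt
    have h2 : ContDiffAt ℝ 2 (fun y : EuclideanSpace ℝ (Fin n) => y ⟨1, h11⟩) x :=
      (EuclideanSpace.proj (⟨1, h11⟩ : Fin n) :
        EuclideanSpace ℝ (Fin n) →L[ℝ] ℝ).contDiff.contDiffAt
    have h4 : ContDiffAt ℝ 2 (fun y : EuclideanSpace ℝ (Fin n) => φ ‖y‖) x :=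
      (hφ.contDiffAt (Ioi_mem_nhds hr)).comp x (contDiffAt_norm (𝕜 := ℝ) hx)
    exact (h1.mul h2).mul h4
  · intro β
    have hent := hessian_entry n φ hφ ⟨0, h01⟩ ⟨1, h11⟩ u hufun x hx
    set Hf : Fin n → Fin n → ℝ := fun a b =>
      (if b = a then 1 else 0) * (x ⟨0, h01⟩ * x ⟨1, h11⟩ * deriv φ ‖x‖ / ‖x‖)
        + (if (⟨1, h11⟩ : Fin n) = a then 1 else 0) * (deriv φ ‖x‖ * x b * x ⟨0, h01⟩ / ‖x‖)
        + (if (⟨0, h01⟩ : Fin n) = a then 1 else 0) * (deriv φ ‖x‖ * x b * x ⟨1, h11⟩ / ‖x‖)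
        + (if (⟨1, h11⟩ : Fin n) = b then 1 else 0) *
            (φ ‖x‖ * (if (⟨0, h01⟩ : Fin n) = a then 1 else 0)
              + x ⟨0, h01⟩ * deriv φ ‖x‖ * x a / ‖x‖)
        + (if (⟨0, h01⟩ : Fin n) = b then 1 else 0) *
            (φ ‖x‖ * (if (⟨1, h11⟩ : Fin n) = a then 1 else 0)
              + x ⟨1, h11⟩ * deriv φ ‖x‖ * x a / ‖x‖)
        + x ⟨0, h01⟩ * x ⟨1, h11⟩ * deriv (deriv φ) ‖x‖ * x a * x b / ‖x‖^2
        - x ⟨0, h01⟩ * x ⟨1, h11⟩ * deriv φ ‖x‖ * x a * x b / ‖x‖^3 with hHf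
    have hMat : (Matrix.of fun i j : Fin n =>
        fderiv ℝ (fun y => fderiv ℝ u y (EuclideanSpace.single j 1)) x
          (EuclideanSpace.single i 1)) = Matrix.of Hf := by
      ext i j
      exact hent i j
    rw [hMat]
    have hsq : ∑ k : Fin n, x k * x k = ‖x‖^2 := by
      rw [← real_inner_self_eq_norm_sq]
      simp only [PiLp.inner_apply, RCLike.inner_apply, conj_trivial, mul_comm]
    have hconst : ∀ c : ℝ, ∑ _k : Fin n, c = n * c := by
      intro c; simp [Finset.sum_const, Finset.card_univ, nsmul_eq_mul]
    have hT : ∀ i : Fin n, (∑ k, x k * Hf k i) =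
        (if (⟨0, h01⟩ : Fin n) = i then 1 else 0) *
            (x ⟨1, h11⟩ * (φ ‖x‖ + deriv φ ‖x‖ * ‖x‖))
          + (if (⟨1, h11⟩ : Fin n) = i then 1 else 0) *
            (x ⟨0, h01⟩ * (φ ‖x‖ + deriv φ ‖x‖ * ‖x‖))
          + x i * (2 * x ⟨0, h01⟩ * x ⟨1, h11⟩ * deriv φ ‖x‖ / ‖x‖
              + x ⟨0, h01⟩ * x ⟨1, h11⟩ * deriv (deriv φ) ‖x‖) := by
      intro i
      have hdecomp : ∀ k, x k * Hf k i =
          (if i = k then (1:ℝ) else 0) * (x k * (x ⟨0, h01⟩ * x ⟨1, h11⟩ * deriv φ ‖x‖ / ‖x‖))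
          + (if (⟨1, h11⟩ : Fin n) = k then (1:ℝ) else 0) *
              (x k * (deriv φ ‖x‖ * x i * x ⟨0, h01⟩ / ‖x‖)
                + x k * (φ ‖x‖ * (if (⟨0, h01⟩ : Fin n) = i then 1 else 0)))
          + (if (⟨0, h01⟩ : Fin n) = k then (1:ℝ) else 0) *
              (x k * (deriv φ ‖x‖ * x i * x ⟨1, h11⟩ / ‖x‖)
                + x k * (φ ‖x‖ * (if (⟨1, h11⟩ : Fin n) = i then 1 else 0)))
          + (x k * x k) *
              ((if (⟨1, h11⟩ : Fin n) = i then (1:ℝ) else 0) * (x ⟨0, h01⟩ * deriv φ ‖x‖ / ‖x‖)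
                + (if (⟨0, h01⟩ : Fin n) = i then 1 else 0) * (x ⟨1, h11⟩ * deriv φ ‖x‖ / ‖x‖)
                + x ⟨0, h01⟩ * x ⟨1, h11⟩ * deriv (deriv φ) ‖x‖ * x i / ‖x‖^2
                - x ⟨0, h01⟩ * x ⟨1, h11⟩ * deriv φ ‖x‖ * x i / ‖x‖^3) := by
        intro k; simp only [hHf]; ring
      rw [Finset.sum_congr rfl fun k _ => hdecomp k]
      simp only [Finset.sum_add_distrib]
      rw [sum_delta', sum_delta', sum_delta', ← Finset.sum_mul, hsq]
      field_simp
      split_ifs <;> ring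
    rw [show Matrix.trace ((Matrix.of fun i j : Fin n =>
        (if i = j then (1 : ℝ) else 0) + β * (x i / ‖x‖) * (x j / ‖x‖)) * Matrix.of Hf)
        = ∑ i, ∑ k, ((if i = k then (1 : ℝ) else 0) + β * (x i / ‖x‖) * (x k / ‖x‖)) * Hf k i from by
      simp [Matrix.trace, Matrix.diag, Matrix.mul_apply]]
    have hstep : ∀ i : Fin n,
        (∑ k, ((if i = k then (1:ℝ) else 0) + β * (x i / ‖x‖) * (x k / ‖x‖)) * Hf k i)
        = Hf i i + (β / ‖x‖^2 * x i) * (∑ k, x k * Hf k i) := by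
      intro i
      have hpt : ∀ k, ((if i = k then (1:ℝ) else 0) + β * (x i / ‖x‖) * (x k / ‖x‖)) * Hf k i
          = (if i = k then (1:ℝ) else 0) * Hf k i + (β / ‖x‖^2 * x i) * (x k * Hf k i) := by
        intro k; ring
      rw [Finset.sum_congr rfl fun k _ => hpt k, Finset.sum_add_distrib, sum_delta',
        ← Finset.mul_sum]
    rw [Finset.sum_congr rfl fun i _ => hstep i, Finset.sum_add_distrib]
    have hdiag : ∑ i : Fin n, Hf i i =
        n * (x ⟨0, h01⟩ * x ⟨1, h11⟩ * deriv φ ‖x‖ / ‖x‖)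
          + 3 * (x ⟨0, h01⟩ * x ⟨1, h11⟩ * deriv φ ‖x‖ / ‖x‖)
          + x ⟨0, h01⟩ * x ⟨1, h11⟩ * deriv (deriv φ) ‖x‖ := by
      have hdd : ∀ i : Fin n, Hf i i =
          (if (⟨1, h11⟩ : Fin n) = i then (1:ℝ) else 0) *
              (deriv φ ‖x‖ * x i * x ⟨0, h01⟩ / ‖x‖
                + (φ ‖x‖ * (if (⟨0, h01⟩ : Fin n) = i then 1 else 0)
                  + x ⟨0, h01⟩ * deriv φ ‖x‖ * x i / ‖x‖))
          + (if (⟨0, h01⟩ : Fin n) = i then (1:ℝ) else 0) *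
              (deriv φ ‖x‖ * x i * x ⟨1, h11⟩ / ‖x‖
                + (φ ‖x‖ * (if (⟨1, h11⟩ : Fin n) = i then 1 else 0)
                  + x ⟨1, h11⟩ * deriv φ ‖x‖ * x i / ‖x‖))
          + (x i * x i) * (x ⟨0, h01⟩ * x ⟨1, h11⟩ * deriv (deriv φ) ‖x‖ / ‖x‖^2
              - x ⟨0, h01⟩ * x ⟨1, h11⟩ * deriv φ ‖x‖ / ‖x‖^3)
          + x ⟨0, h01⟩ * x ⟨1, h11⟩ * deriv φ ‖x‖ / ‖x‖ := by
        intro i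
        simp only [hHf, if_true]
        ring
      rw [Finset.sum_congr rfl fun i _ => hdd i]
      simp only [Finset.sum_add_distrib]
      rw [sum_delta', sum_delta', ← Finset.sum_mul, hsq, hconst _]
      simp only [if_neg hne, if_neg (Ne.symm hne)]
      field_simp
      ring
    have hquad : ∑ i : Fin n, (β / ‖x‖^2 * x i) * (∑ k, x k * Hf k i)
        = β / ‖x‖^2 * (x ⟨0, h01⟩ * x ⟨1, h11⟩ *
            (2 * φ ‖x‖ + 4 * ‖x‖ * deriv φ ‖x‖ + ‖x‖^2 * deriv (deriv φ) ‖x‖)) := by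
      rw [Finset.sum_congr rfl fun i _ => by rw [hT i]]
      have hdec2 : ∀ i : Fin n,
          (β / ‖x‖^2 * x i) *
            ((if (⟨0, h01⟩ : Fin n) = i then 1 else 0) *
                (x ⟨1, h11⟩ * (φ ‖x‖ + deriv φ ‖x‖ * ‖x‖))
              + (if (⟨1, h11⟩ : Fin n) = i then 1 else 0) *
                (x ⟨0, h01⟩ * (φ ‖x‖ + deriv φ ‖x‖ * ‖x‖))
              + x i * (2 * x ⟨0, h01⟩ * x ⟨1, h11⟩ * deriv φ ‖x‖ / ‖x‖
                  + x ⟨0, h01⟩ * x ⟨1, h11⟩ * deriv (deriv φ) ‖x‖))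
          = (if (⟨0, h01⟩ : Fin n) = i then (1:ℝ) else 0) *
                (β / ‖x‖^2 * x i * (x ⟨1, h11⟩ * (φ ‖x‖ + deriv φ ‖x‖ * ‖x‖)))
            + (if (⟨1, h11⟩ : Fin n) = i then (1:ℝ) else 0) *
                (β / ‖x‖^2 * x i * (x ⟨0, h01⟩ * (φ ‖x‖ + deriv φ ‖x‖ * ‖x‖)))
            + (x i * x i) * (β / ‖x‖^2 * (2 * x ⟨0, h01⟩ * x ⟨1, h11⟩ * deriv φ ‖x‖ / ‖x‖
                  + x ⟨0, h01⟩ * x ⟨1, h11⟩ * deriv (deriv φ) ‖x‖)) := by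
        intro i; ring
      rw [Finset.sum_congr rfl fun i _ => hdec2 i]
      simp only [Finset.sum_add_distrib]
      rw [sum_delta', sum_delta', ← Finset.sum_mul, hsq]
      field_simp
      first | ring | (split_ifs <;> ring)
    rw [hdiag, hquad]
    field_simp
end
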